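/- arXiv:1712.02302 — 2 statements merged into one kernel-verified Lean document; each statement's English description precedes it below -/
import Mathlib

section
/- Let G be a finite group, F a field, and I a two-sided ideal in the group algebra F[G]. Then for all natural numbers a, b, the slice rank of the multiplication tensor of F[G] is at most codim I^a + codim I^b + dim I^{a+b}. -/
/-- `HasSliceRankLE K F r` : the tensor `F` can be written as a sum of `r` slice terms. -/
def HasSliceRankLE {X Y Z : Type*} (K : Type*) [Field K]
    (F : X → Y → Z → K) (r : ℕ) : Prop :=
  ∃ T : Fin r → (X → Y → Z → K),
    (∀ i, (∃ (f : X → K) (g : Y → Z → K), T i = fun x y z => f x * g y z) ∨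
          (∃ (f : Y → K) (g : X → Z → K), T i = fun x y z => f y * g x z) ∨
          (∃ (f : Z → K) (g : X → Y → K), T i = fun x y z => f z * g x y)) ∧
    ∀ x y z, F x y z = ∑ i, T i x y z

/-- The slice rank of a 3-tensor. -/
noncomputable def sliceRank {X Y Z : Type*} (K : Type*) [Field K]
    (F : X → Y → Z → K) : ℕ :=
  sInf {r | HasSliceRankLE K F r}

private lemma hasSliceRankLE_add {X Y Z K : Type*} [Field K] {F F' : X → Y → Z → K} {r s : ℕ}
    (h : HasSliceRankLE K F r) (h' : HasSliceRankLE K F' s) :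
    HasSliceRankLE K (fun x y z => F x y z + F' x y z) (r + s) := by
  obtain ⟨T, hT, hTs⟩ := h
  obtain ⟨T', hT', hTs'⟩ := h'
  refine ⟨fun i => Fin.addCases (fun i => T i) (fun j => T' j) i, fun i => ?_, fun x y z => ?_⟩
  · induction i using Fin.addCases with
    | left i => simpa using hT i
    | right j => simpa using hT' j
  · rw [Fin.sum_univ_add]
    simp only [Fin.addCases_left, Fin.addCases_right]
    rw [hTs x y z, hTs' x y z]

private lemma hasSliceRankLE_sum1 {X Y Z K : Type*} [Field K] (n : ℕ)
    (f : Fin n → X → K) (g : Fin n → Y → Z → K) :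
    HasSliceRankLE K (fun x y z => ∑ i, f i x * g i y z) n :=
  ⟨fun i x y z => f i x * g i y z, fun i => Or.inl ⟨f i, g i, rfl⟩, fun _ _ _ => rfl⟩

private lemma hasSliceRankLE_sum2 {X Y Z K : Type*} [Field K] (n : ℕ)
    (f : Fin n → Y → K) (g : Fin n → X → Z → K) :
    HasSliceRankLE K (fun x y z => ∑ i, f i y * g i x z) n :=
  ⟨fun i x y z => f i y * g i x z, fun i => Or.inr (Or.inl ⟨f i, g i, rfl⟩), fun _ _ _ => rfl⟩

private lemma hasSliceRankLE_sum3 {X Y Z K : Type*} [Field K] (n : ℕ)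
    (f : Fin n → Z → K) (g : Fin n → X → Y → K) :
    HasSliceRankLE K (fun x y z => ∑ i, f i z * g i x y) n :=
  ⟨fun i x y z => f i z * g i x y, fun i => Or.inr (Or.inr ⟨f i, g i, rfl⟩), fun _ _ _ => rfl⟩

private lemma right_mul_mem_pow {R : Type*} [Semiring R] (I : Ideal R)
    (hI : ∀ x ∈ I, ∀ r : R, x * r ∈ I) :
    ∀ n : ℕ, ∀ x ∈ I ^ n, ∀ r : R, x * r ∈ I ^ n := by
  intro n
  induction n with
  | zero =>
    intro x _ r
    rw [Submodule.pow_zero, Submodule.one_eq_span]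
    exact Submodule.mem_span_singleton.2 ⟨x * r, by simp [smul_eq_mul]⟩
  | succ n ih =>
    intro x hx r
    rw [Submodule.pow_succ] at hx ⊢
    refine Submodule.mul_induction_on hx (fun m hm y hy => ?_) (fun s t hs ht => ?_)
    · rw [mul_assoc]
      exact Submodule.mul_mem_mul hm (hI y hy r)
    · rw [add_mul]
      exact add_mem hs ht

private lemma mul_mem_pow_add {R : Type*} [Semiring R] (I : Ideal R)
    (hI : ∀ x ∈ I, ∀ r : R, x * r ∈ I) :
    ∀ (b a : ℕ) (x : R), x ∈ I ^ a → ∀ y ∈ I ^ b, x * y ∈ I ^ (a + b) := by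
  intro b
  induction b with
  | zero =>
    intro a x hx y _
    rw [Nat.add_zero]
    exact right_mul_mem_pow I hI a x hx y
  | succ n ih =>
    intro a x hx y hy
    rw [Submodule.pow_succ] at hy
    have : ∀ z, z ∈ I ^ n * I → x * z ∈ I ^ (a + (n + 1)) := by
      intro z hz
      refine Submodule.mul_induction_on hz (fun m hm w hw => ?_) (fun s t hs ht => ?_)
      · have h1 : x * m ∈ I ^ (a + n) := ih a x hx m hm
        have h2 : (x * m) * w ∈ I ^ (a + n) * I := Submodule.mul_mem_mul h1 hw
        rw [← Submodule.pow_succ] at h2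
        rw [← mul_assoc]
        simpa [Nat.add_assoc] using h2
      · rw [mul_add]
        exact add_mem hs ht
    exact this y hy

set_option maxHeartbeats 1000000 in
open Module in
/-- For a two-sided ideal `I` of the group algebra `F[G]` of a finite group,
the slice rank of the multiplication tensor of `F[G]` (in the group-element
basis, where it is the multiplication tensor of `G`) is at most
`codim I^a + codim I^b + dim I^(a+b)`. -/
theorem sliceRank_group_le_codim_add_codim_add_dim {K : Type*} [Field K]
    {G : Type*} [Group G] [Fintype G] [DecidableEq G]
    (I : Ideal (MonoidAlgebra K G)) (hI : ∀ x ∈ I, ∀ r : MonoidAlgebra K G, x * r ∈ I)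
    (a b : ℕ) :
    sliceRank K (fun g h k : G => if g * h = k then (1 : K) else 0) ≤
      (Fintype.card G - finrank K (Submodule.restrictScalars K (I ^ a))) +
      (Fintype.card G - finrank K (Submodule.restrictScalars K (I ^ b))) +
      finrank K (Submodule.restrictScalars K (I ^ (a + b))) := by
  classical
  haveI : FiniteDimensional K (MonoidAlgebra K G) :=
    LinearEquiv.finiteDimensional (MonoidAlgebra.coeffLinearEquiv K).symm
  set A : Submodule K (MonoidAlgebra K G) := Submodule.restrictScalars K (I ^ a) with hA
  set B : Submodule K (MonoidAlgebra K G) := Submodule.restrictScalars K (I ^ b) with hB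
  set C : Submodule K (MonoidAlgebra K G) := Submodule.restrictScalars K (I ^ (a + b)) with hC
  obtain ⟨A', hAc⟩ := Submodule.exists_isCompl A
  obtain ⟨B', hBc⟩ := Submodule.exists_isCompl B
  set δ : G → MonoidAlgebra K G := fun g => MonoidAlgebra.single g 1 with hδ
  set u : G → MonoidAlgebra K G :=
    fun g => (A.linearProjOfIsCompl A' hAc (δ g) : MonoidAlgebra K G) with hu
  set v : G → MonoidAlgebra K G :=
    fun g => (A'.linearProjOfIsCompl A hAc.symm (δ g) : MonoidAlgebra K G) with hv
  have huv : ∀ g, u g + v g = δ g := fun g =>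
    Submodule.projection_add_projection_eq_self hAc (δ g)
  set p : G → MonoidAlgebra K G :=
    fun h => (B.linearProjOfIsCompl B' hBc (δ h) : MonoidAlgebra K G) with hp
  set q : G → MonoidAlgebra K G :=
    fun h => (B'.linearProjOfIsCompl B hBc.symm (δ h) : MonoidAlgebra K G) with hq
  have hpq : ∀ h, p h + q h = δ h := fun h =>
    Submodule.projection_add_projection_eq_self hBc (δ h)
  have huA : ∀ g, u g ∈ A := fun g => (A.linearProjOfIsCompl A' hAc (δ g)).2
  have hpB : ∀ h, p h ∈ B := fun h => (B.linearProjOfIsCompl B' hBc (δ h)).2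
  have hupC : ∀ g h, u g * p h ∈ C := fun g h =>
    mul_mem_pow_add I hI b a (u g) (huA g) (p h) (hpB h)
  set nA := finrank K A' with hnA
  set nB := finrank K B' with hnB
  set nC := finrank K C with hnC
  let eA : Basis (Fin nA) K A' := Module.finBasis K A'
  let eB : Basis (Fin nB) K B' := Module.finBasis K B'
  let eC : Basis (Fin nC) K C := Module.finBasis K C
  let w : G → G → C := fun g h => ⟨u g * p h, hupC g h⟩
  set c : Fin nA → G → K :=
    fun i g => eA.repr (A'.linearProjOfIsCompl A hAc.symm (δ g)) i with hcc
  set d : Fin nB → G → K :=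
    fun j h => eB.repr (B'.linearProjOfIsCompl B hBc.symm (δ h)) j with hdd
  set e : Fin nC → G → G → K := fun m g h => eC.repr (w g h) m with hee
  -- basis expansions
  have hvg : ∀ g, v g = ∑ i, c i g • (eA i : MonoidAlgebra K G) := by
    intro g
    have h0 := eA.sum_repr (A'.linearProjOfIsCompl A hAc.symm (δ g))
    calc v g = ((∑ i, eA.repr (A'.linearProjOfIsCompl A hAc.symm (δ g)) i • eA i : A') :
          MonoidAlgebra K G) := by rw [h0]
      _ = _ := by push_cast; rfl
  have hqh : ∀ h, q h = ∑ j, d j h • (eB j : MonoidAlgebra K G) := by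
    intro h
    have h0 := eB.sum_repr (B'.linearProjOfIsCompl B hBc.symm (δ h))
    calc q h = ((∑ j, eB.repr (B'.linearProjOfIsCompl B hBc.symm (δ h)) j • eB j : B') :
          MonoidAlgebra K G) := by rw [h0]
      _ = _ := by push_cast; rfl
  have hwgh : ∀ g h, u g * p h = ∑ m, e m g h • (eC m : MonoidAlgebra K G) := by
    intro g h
    have h0 := eC.sum_repr (w g h)
    calc u g * p h = ((∑ m, eC.repr (w g h) m • eC m : C) : MonoidAlgebra K G) := by rw [h0]
      _ = _ := by push_cast; rfl
  -- coefficient extraction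
  have happ1 : ∀ g h k, (v g * δ h).coeff k = ∑ i, c i g * ((eA i : MonoidAlgebra K G) * δ h).coeff k := by
    intro g h k
    rw [hvg g, Finset.sum_mul]
    rw [Finset.sum_congr rfl
      (fun i _ => smul_mul_assoc (c i g) (eA i : MonoidAlgebra K G) (δ h))]
    rw [MonoidAlgebra.coeff_sum, Finsupp.finset_sum_apply]
    exact Finset.sum_congr rfl fun i _ => MonoidAlgebra.coeff_smul_apply _ _ _
  have happ2 : ∀ g h k, (u g * q h).coeff k = ∑ j, d j h * (u g * (eB j : MonoidAlgebra K G)).coeff k := by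
    intro g h k
    rw [hqh h, Finset.mul_sum]
    rw [Finset.sum_congr rfl
      (fun j _ => (mul_smul_comm (d j h) (u g) (eB j : MonoidAlgebra K G)))]
    rw [MonoidAlgebra.coeff_sum, Finsupp.finset_sum_apply]
    exact Finset.sum_congr rfl fun j _ => MonoidAlgebra.coeff_smul_apply _ _ _
  have happ3 : ∀ g h k, (u g * p h).coeff k = ∑ m, ((eC m : MonoidAlgebra K G).coeff k) * e m g h := by
    intro g h k
    rw [hwgh g h, MonoidAlgebra.coeff_sum, Finsupp.finset_sum_apply]
    exact Finset.sum_congr rfl fun m _ =>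
      (MonoidAlgebra.coeff_smul_apply _ _ _).trans (mul_comm _ _)
  -- the key pointwise identity
  have hkey : (fun g h k : G => if g * h = k then (1 : K) else 0)
      = fun g h k => (∑ i, c i g * ((eA i : MonoidAlgebra K G) * δ h).coeff k) +
          (∑ j, d j h * (u g * (eB j : MonoidAlgebra K G)).coeff k) +
          (∑ m, ((eC m : MonoidAlgebra K G).coeff k) * e m g h) := by
    funext g h k
    have hsingle : (if g * h = k then (1 : K) else 0) = (δ g * δ h).coeff k := by
      simp only [hδ]
      rw [MonoidAlgebra.single_mul_single, one_mul, MonoidAlgebra.single_apply]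
    have hsplit : δ g * δ h = v g * δ h + u g * q h + u g * p h := by
      rw [← huv g, ← hpq h]
      noncomm_ring
    rw [hsingle, hsplit, MonoidAlgebra.coeff_add, MonoidAlgebra.coeff_add, Finsupp.add_apply, Finsupp.add_apply, happ1, happ2, happ3]
  -- slice rank bound
  have hmem : HasSliceRankLE K (fun g h k : G => if g * h = k then (1 : K) else 0)
      (nA + nB + nC) := by
    rw [hkey]
    exact hasSliceRankLE_add
      (hasSliceRankLE_add
        (hasSliceRankLE_sum1 nA (fun i g => c i g)
          (fun i h k => ((eA i : MonoidAlgebra K G) * δ h).coeff k))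
        (hasSliceRankLE_sum2 nB (fun j h => d j h)
          (fun j g k => (u g * (eB j : MonoidAlgebra K G)).coeff k)))
      (hasSliceRankLE_sum3 nC (fun m k => (eC m : MonoidAlgebra K G).coeff k)
        (fun m g h => e m g h))
  have hle : sliceRank K (fun g h k : G => if g * h = k then (1 : K) else 0) ≤ nA + nB + nC :=
    Nat.sInf_le hmem
  refine hle.trans ?_
  have hdim : finrank K (MonoidAlgebra K G) = Fintype.card G :=
    (MonoidAlgebra.coeffLinearEquiv K).finrank_eq.trans (Module.finrank_finsupp_self K)
  have hA' : finrank K A + nA = Fintype.card G := by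
    rw [hnA, ← hdim]; exact Submodule.finrank_add_eq_of_isCompl hAc
  have hB' : finrank K B + nB = Fintype.card G := by
    rw [hnB, ← hdim]; exact Submodule.finrank_add_eq_of_isCompl hBc
  omega
end

section
/- For any tensor t : F^X ⊗ F^Y ⊗ F^Z → F, the flat rank of t is at most the slice rank of t. -/
open Module

lemma matrix_rank_add_le {K : Type*} [Field K] {m n : Type*} [Fintype m] [Fintype n]
    (A B : Matrix m n K) : (A + B).rank ≤ A.rank + B.rank := by
  classical
  have h : LinearMap.range (A + B).mulVecLin ≤
      LinearMap.range A.mulVecLin ⊔ LinearMap.range B.mulVecLin := by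
    rintro _ ⟨v, rfl⟩
    exact Submodule.mem_sup.2 ⟨A.mulVecLin v, ⟨v, rfl⟩, B.mulVecLin v, ⟨v, rfl⟩,
      by simp [Matrix.mulVecLin_apply, Matrix.add_mulVec]⟩
  calc (A + B).rank ≤ finrank K ↥(LinearMap.range A.mulVecLin ⊔ LinearMap.range B.mulVecLin) :=
        Submodule.finrank_mono h
    _ ≤ A.rank + B.rank := Submodule.finrank_add_le_finrank_add_finrank _ _

lemma matrix_rank_sum_le {K : Type*} [Field K] {m n ι : Type*} [Fintype m] [Fintype n]
    (s : Finset ι) (M : ι → Matrix m n K) :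
    (∑ i ∈ s, M i).rank ≤ ∑ i ∈ s, (M i).rank := by
  classical
  induction s using Finset.induction with
  | empty => simp [Matrix.rank_zero]
  | insert _ _ h ih =>
    rw [Finset.sum_insert h, Finset.sum_insert h]
    exact (matrix_rank_add_le _ _).trans (add_le_add_right ih _)

lemma rank_outer_le_one {K : Type*} [Field K] {m n : Type*} [Fintype m] [Fintype n]
    (f : m → K) (g : n → K) :
    (Matrix.of fun x y => f x * g y).rank ≤ 1 := by
  classical
  have h : LinearMap.range (Matrix.of fun x y => f x * g y).mulVecLin ≤ K ∙ f := by
    rintro _ ⟨v, rfl⟩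
    refine Submodule.mem_span_singleton.2 ⟨∑ y, g y * v y, ?_⟩
    ext x
    simp only [Matrix.mulVecLin_apply, Matrix.mulVec, dotProduct, Matrix.of_apply,
      Pi.smul_apply, smul_eq_mul, Finset.sum_mul]
    exact Finset.sum_congr rfl fun y _ => by ring
  calc (Matrix.of fun x y => f x * g y).rank ≤ finrank K ↥(K ∙ f) := Submodule.finrank_mono h
    _ ≤ 1 := by
      simpa using finrank_span_le_card ({f} : Set (m → K))



/-- Contraction of the third factor of a 3-tensor with a vector. -/
noncomputable def contractZ {K : Type*} [Field K] {X Y Z : Type*} [Fintype Z]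
    (t : X → Y → Z → K) (v : Z → K) : Matrix X Y K :=
  Matrix.of fun x y => ∑ z, t x y z * v z

/-- `HasFlatRankLE K t ℓ` : there is a subspace `V` of the third factor, of
codimension `c`, with all contractions of `t` against vectors of `V` of matrix
rank at most `r`, and `r + c ≤ ℓ`. -/
def HasFlatRankLE {X Y Z : Type*} (K : Type*) [Field K]
    [Fintype X] [Fintype Y] [Fintype Z] (t : X → Y → Z → K) (ℓ : ℕ) : Prop :=
  ∃ (V : Submodule K (Z → K)) (r : ℕ),
    (∀ v ∈ V, (contractZ t v).rank ≤ r) ∧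
    r + (Fintype.card Z - Module.finrank K V) ≤ ℓ

/-- The flat rank of a 3-tensor. -/
noncomputable def flatRank {X Y Z : Type*} (K : Type*) [Field K]
    [Fintype X] [Fintype Y] [Fintype Z] (t : X → Y → Z → K) : ℕ :=
  sInf {ℓ | HasFlatRankLE K t ℓ}



lemma hasSliceRankLE_card {K : Type*} [Field K] {X Y Z : Type*} [Fintype Z]
    (t : X → Y → Z → K) : HasSliceRankLE K t (Fintype.card Z) := by
  classical
  set e := (Fintype.equivFin Z).symm with he
  refine ⟨fun i x y z => (if z = e i then (1:K) else 0) * t x y (e i), fun i =>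
    Or.inr (Or.inr ⟨fun z => if z = e i then 1 else 0, fun x y => t x y (e i), rfl⟩), ?_⟩
  intro x y z
  show t x y z = ∑ i, (if z = e i then (1:K) else 0) * t x y (e i)
  rw [← Equiv.sum_comp e.symm (fun i => (if z = e i then (1:K) else 0) * t x y (e i))]
  simp

lemma hasFlat_of_hasSlice {K : Type*} [Field K] {X Y Z : Type*}
    [Fintype X] [Fintype Y] [Fintype Z] (t : X → Y → Z → K) (r : ℕ)
    (h : HasSliceRankLE K t r) : HasFlatRankLE K t r := by
  classical
  obtain ⟨T, hT, hsum⟩ := h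
  set S : Finset (Fin r) := Finset.univ.filter (fun i =>
    ¬ ((∃ (f : X → K) (g : Y → Z → K), T i = fun x y z => f x * g y z) ∨
       (∃ (f : Y → K) (g : X → Z → K), T i = fun x y z => f y * g x z))) with hS
  -- for i ∈ S, the Z-type decomposition holds
  have hZtype : ∀ i ∈ S, ∃ (f : Z → K) (g : X → Y → K), T i = fun x y z => f z * g x y := by
    intro i hi
    rw [hS, Finset.mem_filter] at hi
    rcases hT i with h1 | h2 | h3
    · exact absurd (Or.inl h1) hi.2
    · exact absurd (Or.inr h2) hi.2
    · exact h3
  choose fZ gZ hfZ using hZtype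
  -- the linear map cutting out V
  let φ : (Z → K) → ((Z → K) →ₗ[K] K) := fun f =>
    { toFun := fun v => ∑ z, f z * v z
      map_add' := by intro a b; simp [mul_add, Finset.sum_add_distrib]
      map_smul' := by intro c a; simp [Finset.mul_sum, mul_left_comm] }
  let Φ : (Z → K) →ₗ[K] (S → K) := LinearMap.pi (fun i : S => φ (fZ i.1 i.2))
  refine ⟨LinearMap.ker Φ, Sᶜ.card, ?_, ?_⟩
  · intro v hv
    have hv' : ∀ i (hi : i ∈ S), ∑ z, fZ i hi z * v z = 0 := by
      intro i hi
      have := congrFun (LinearMap.mem_ker.1 hv) ⟨i, hi⟩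
      simpa [Φ, φ] using this
    have hdecomp : contractZ t v = ∑ i, contractZ (T i) v := by
      ext x y
      simp only [contractZ, Matrix.of_apply, Matrix.sum_apply]
      rw [Finset.sum_comm]
      exact Finset.sum_congr rfl fun z _ => by rw [hsum x y z, Finset.sum_mul]
    rw [hdecomp]
    calc (∑ i, contractZ (T i) v).rank ≤ ∑ i, (contractZ (T i) v).rank :=
          matrix_rank_sum_le _ _
      _ ≤ ∑ i : Fin r, (if i ∈ S then 0 else 1) := by
          refine Finset.sum_le_sum fun i _ => ?_
          by_cases hi : i ∈ S
          · -- Z-type term contracts to zero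
            have : contractZ (T i) v = 0 := by
              ext x y
              have : ∑ z, T i x y z * v z = gZ i hi x y * ∑ z, fZ i hi z * v z := by
                rw [Finset.mul_sum]
                refine Finset.sum_congr rfl fun z _ => ?_
                rw [hfZ i hi]; ring
              simp [contractZ, this, hv' i hi]
            simp [hi, this, Matrix.rank_zero]
          · simp only [hi, if_false]
            rw [hS, Finset.mem_filter, not_and, not_not] at hi
            rcases hi (Finset.mem_univ i) with ⟨f, g, hfg⟩ | ⟨f, g, hfg⟩
            · have : contractZ (T i) v =
                  Matrix.of fun x y => f x * (∑ z, g y z * v z) := by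
                ext x y
                simp only [contractZ, Matrix.of_apply, hfg, Finset.mul_sum]
                exact Finset.sum_congr rfl fun z _ => by ring
              rw [this]; exact rank_outer_le_one f _
            · have : contractZ (T i) v =
                  Matrix.of fun x y => (∑ z, g x z * v z) * f y := by
                ext x y
                simp only [contractZ, Matrix.of_apply, hfg, Finset.sum_mul]
                exact Finset.sum_congr rfl fun z _ => by ring
              rw [this]
              exact rank_outer_le_one (fun x => ∑ z, g x z * v z) f
      _ = Sᶜ.card := by
          have h0 : ∀ i : Fin r, (if i ∈ S then (0:ℕ) else 1) = if i ∈ Sᶜ then 1 else 0 := by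
            intro i; by_cases hi : i ∈ S <;> simp [hi]
          simp_rw [h0]
          rw [Finset.sum_ite_mem, Finset.univ_inter, Finset.sum_const, smul_eq_mul, mul_one]
  · have hrn : finrank K (LinearMap.range Φ) + finrank K (LinearMap.ker Φ)
        = Fintype.card Z := by
      rw [LinearMap.finrank_range_add_finrank_ker]
      simp [Module.finrank_pi]
    have hle : finrank K (LinearMap.range Φ) ≤ S.card := by
      have := Submodule.finrank_le (LinearMap.range Φ)
      simpa [Module.finrank_pi] using this
    have hcards : S.card + Sᶜ.card = r := by
      rw [Finset.card_add_card_compl]; simp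
    omega

/-- The flat rank of a tensor is at most its slice rank. -/
theorem flatRank_le_sliceRank {K : Type*} [Field K]
    {X Y Z : Type*} [Fintype X] [Fintype Y] [Fintype Z] (t : X → Y → Z → K) :
    flatRank K t ≤ sliceRank K t := by
  have hne : {r | HasSliceRankLE K t r}.Nonempty := ⟨_, hasSliceRankLE_card t⟩
  have hmem : HasSliceRankLE K t (sliceRank K t) := Nat.sInf_mem hne
  exact Nat.sInf_le (hasFlat_of_hasSlice t _ hmem)
end
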